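/- In a cartesian differential category, each n-th derivative f^{(n)} : A × Aⁿ → B is recovered from the iterated differential by f^{(n)}(y) = (Dⁿ f)(y°), where y° : X → A^(2ⁿ) has y°_∅ = π₀ y, y°_{k} = π_k y for singletons {k}, and y°_I = 0 for |I| ≥ 2. -/

import Mathlib

universe u

open Finset

/-- Unordered partitions of `Fin n` into nonempty parts, as a `Finset`. -/
def partitions (n : ℕ) : Finset (Finset (Finset (Fin n))) :=
  Finset.univ.filter fun P =>
    (∅ ∉ P) ∧ ∀ i : Fin n, (P.filter fun s => i ∈ s).card = 1

/-- Partial injections from `Fin m` to `Fin n` (partial isomorphisms `[m] ≃ [n]`). -/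
def partialInjs (m n : ℕ) : Finset (Fin m → Option (Fin n)) :=
  Finset.univ.filter fun θ =>
    ∀ i j : Fin m, ∀ a : Fin n, θ i = some a → θ j = some a → i = j

/-- The arrangement (Notation 5) associated to a partial isomorphism `θ : [m] ≃ [n]`:
the tail of the list `x_{θ₍₁₎θ₍₂₎}`, i.e. everything after the leading entry `(0,0)`:
matched pairs `(i, θ i)`, then unmatched rows `(i, 0)`, then unmatched columns `(0, j)`. -/
def arrangeTail (m n : ℕ) (θ : Fin m → Option (Fin n)) :
    List (Fin (m + 1) × Fin (n + 1)) :=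
  ((List.finRange m).filterMap fun i => (θ i).map fun j => (i.succ, j.succ))
    ++ ((List.finRange m).filterMap fun i =>
          if θ i = none then some (i.succ, (0 : Fin (n + 1))) else none)
    ++ ((List.finRange n).filterMap fun j =>
          if ∀ i, θ i ≠ some j then some ((0 : Fin (m + 1)), j.succ) else none)

variable (k : Type u) [CommSemiring k]

/-- The data of a cartesian left-`k`-linear category. -/
structure CDCData where
  Obj : Type u
  Hom : Obj → Obj → Type u
  homAdd : ∀ A B, AddCommMonoid (Hom A B)
  homMod : ∀ A B, @Module k (Hom A B) inferInstance (homAdd A B)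
  id : ∀ A, Hom A A
  comp : ∀ {A B C}, Hom B C → Hom A B → Hom A C
  term : Obj
  toTerm : ∀ A, Hom A term
  prod : Obj → Obj → Obj
  fst : ∀ {A B}, Hom (prod A B) A
  snd : ∀ {A B}, Hom (prod A B) B
  pair : ∀ {Z A B}, Hom Z A → Hom Z B → Hom Z (prod A B)

variable {k}

instance (C : CDCData k) (A B : C.Obj) : AddCommMonoid (C.Hom A B) := C.homAdd A B
instance (C : CDCData k) (A B : C.Obj) : Module k (C.Hom A B) := C.homMod A B

namespace CDCData

/-- `dom A n` is the `(n+1)`-fold product `A × Aⁿ`, nested on the left. -/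
def dom (C : CDCData k) (A : C.Obj) : ℕ → C.Obj
  | 0 => A
  | n + 1 => C.prod (dom C A n) A

/-- Tupling of `n+1` generalized elements of `A` into `A × Aⁿ`. -/
def tupleD (C : CDCData k) {Z A : C.Obj} :
    (n : ℕ) → (Fin (n + 1) → C.Hom Z A) → C.Hom Z (C.dom A n)
  | 0, x => x 0
  | n + 1, x => C.pair (tupleD C n fun i => x i.castSucc) (x (Fin.last (n + 1)))

/-- Tupling of a head together with a list; the head of the list lands in the
*last* slot. -/
def tupList (C : CDCData k) {Z A : C.Obj} (x0 : C.Hom Z A) :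
    (L : List (C.Hom Z A)) → C.Hom Z (C.dom A L.length)
  | [] => x0
  | a :: L => C.pair (tupList C x0 L) a

/-- Zero-padding `v` into the first slot of `A × Aⁿ`. -/
def zpad (C : CDCData k) {Z A : C.Obj} : (n : ℕ) → C.Hom Z A → C.Hom Z (C.dom A n)
  | 0, v => v
  | n + 1, v => C.pair (zpad C n v) 0

/-- The `i`-th projection `A × Aⁿ → A`. -/
def projD (C : CDCData k) {A : C.Obj} : (n : ℕ) → Fin (n + 1) → C.Hom (C.dom A n) A
  | 0, _ => C.id A
  | n + 1, i => Fin.lastCases C.snd (fun j => C.comp (projD C n j) C.fst) i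

/-- The `2ⁿ`-fold product of `A`. -/
def twoPow (C : CDCData k) (A : C.Obj) : ℕ → C.Obj
  | 0 => A
  | n + 1 => C.prod (twoPow C A n) (twoPow C A n)

/-- Tupling of a family indexed by `Fin n → Bool` (characteristic functions of
subsets of `[n]`) into `A^(2ⁿ)`; the last bit is the outermost product factor. -/
def cube (C : CDCData k) {Z A : C.Obj} :
    (n : ℕ) → ((Fin n → Bool) → C.Hom Z A) → C.Hom Z (C.twoPow A n)
  | 0, x => x fun i => i.elim0
  | n + 1, x =>
      C.pair (cube C n fun b => x (Fin.snoc b false))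
        (cube C n fun b => x (Fin.snoc b true))

/-- The subset of `Fin n` with characteristic function `b`. -/
def bset {n : ℕ} (b : Fin n → Bool) : Finset (Fin n) :=
  Finset.univ.filter fun i => b i = true

end CDCData

variable (k)

/-- A (`k`-linear) cartesian differential category, presented via generalized
elements. -/
structure CDC extends CDCData k where
  id_comp : ∀ {A B} (f : Hom A B), comp (id B) f = f
  comp_id : ∀ {A B} (f : Hom A B), comp f (id A) = f
  comp_assoc : ∀ {A B C D} (h : Hom C D) (g : Hom B C) (f : Hom A B),
    comp (comp h g) f = comp h (comp g f)
  -- left `k`-linearity: precomposition is `k`-linear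
  add_comp : ∀ {A B C} (g h : Hom B C) (f : Hom A B),
    comp (g + h) f = comp g f + comp h f
  smul_comp : ∀ {A B C} (r : k) (g : Hom B C) (f : Hom A B),
    comp (r • g) f = r • comp g f
  zero_comp : ∀ {A B C} (f : Hom A B), comp (0 : Hom B C) f = (0 : Hom A C)
  -- cartesian structure
  toTerm_unique : ∀ {A} (f : Hom A term), f = toTerm A
  fst_pair : ∀ {Z A B} (f : Hom Z A) (g : Hom Z B), comp fst (pair f g) = f
  snd_pair : ∀ {Z A B} (f : Hom Z A) (g : Hom Z B), comp snd (pair f g) = g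
  pair_unique : ∀ {Z A B} (h : Hom Z (prod A B)), pair (comp fst h) (comp snd h) = h
  -- the projections are `k`-linear
  fst_comp_add : ∀ {Z A B} (x y : Hom Z (prod A B)),
    comp fst (x + y) = comp fst x + comp fst y
  fst_comp_smul : ∀ {Z A B} (r : k) (x : Hom Z (prod A B)),
    comp fst (r • x) = r • comp fst x
  snd_comp_add : ∀ {Z A B} (x y : Hom Z (prod A B)),
    comp snd (x + y) = comp snd x + comp snd y
  snd_comp_smul : ∀ {Z A B} (r : k) (x : Hom Z (prod A B)),
    comp snd (r • x) = r • comp snd x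
  -- the differential operator
  D : ∀ {A B}, Hom A B → Hom (prod A A) B
  -- (i) D is k-linear
  D_add : ∀ {A B} (f g : Hom A B), D (f + g) = D f + D g
  D_smul : ∀ {A B} (r : k) (f : Hom A B), D (r • f) = r • D f
  -- (ii) D f is k-linear in its second argument
  D_arg_add : ∀ {Z A B} (f : Hom A B) (x u v : Hom Z A),
    comp (D f) (pair x (u + v)) = comp (D f) (pair x u) + comp (D f) (pair x v)
  D_arg_smul : ∀ {Z A B} (f : Hom A B) (r : k) (x u : Hom Z A),
    comp (D f) (pair x (r • u)) = r • comp (D f) (pair x u)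
  -- (iii) D of projections
  D_fst : ∀ {A B}, D (fst (A := A) (B := B)) = comp fst snd
  D_snd : ∀ {A B}, D (snd (A := A) (B := B)) = comp snd snd
  -- (iv) D of identities
  D_id : ∀ {A}, D (id A) = snd
  -- (v) the chain rule
  D_comp : ∀ {A B C} (g : Hom B C) (f : Hom A B),
    D (comp g f) = comp (D g) (pair (comp f fst) (D f))
  -- (vi) D f is D-linear in its first argument
  D_lin : ∀ {Z A B} (f : Hom A B) (x r v : Hom Z A),
    comp (D (D f)) (pair (pair x r) (pair 0 v)) = comp (D f) (pair x v)
  -- (vii) symmetry of the second derivative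
  D_sym : ∀ {Z A B} (f : Hom A B) (x r s : Hom Z A),
    comp (D (D f)) (pair (pair x r) (pair s 0)) =
      comp (D (D f)) (pair (pair x s) (pair r 0))

variable {k}

namespace CDC

/-- The `n`-th derivative `f⁽ⁿ⁾ = (D₁)ⁿ f : A × Aⁿ → B`. -/
def fDeriv (C : CDC k) {A B : C.Obj} (f : C.Hom A B) :
    (n : ℕ) → C.Hom (C.toCDCData.dom A n) B
  | 0 => f
  | n + 1 =>
      C.comp (C.D (fDeriv C f n)) (C.pair C.fst (C.toCDCData.zpad n C.snd))

/-- The iterated differential `Dⁿ f : A^(2ⁿ) → B`. -/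
def iterD (C : CDC k) {A B : C.Obj} (f : C.Hom A B) :
    (n : ℕ) → C.Hom (C.toCDCData.twoPow A n) B
  | 0 => f
  | n + 1 => C.D (iterD C f n)

/-- `f^{(I)}` for `I ⊆ [n]` (Definition 13). -/
def fIdx (C : CDC k) {A B : C.Obj} (f : C.Hom A B) (n : ℕ) (I : Finset (Fin n)) :
    C.Hom (C.toCDCData.dom A n) B :=
  C.comp (fDeriv C f I.card)
    (C.toCDCData.tupleD I.card
      (Fin.cases (C.toCDCData.projD n 0)
        fun j => C.toCDCData.projD n (Fin.succ ((I.orderIsoOfFin rfl j : Fin n)))))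

end CDC


/-!
STATEMENT 3: In a cartesian differential category, each `n`-th derivative
`f⁽ⁿ⁾ : A × Aⁿ → B` is recovered from the iterated differential by
`f⁽ⁿ⁾(y) = (Dⁿ f)(y°)`, where `y° : X → A^(2ⁿ)` has `y°_∅ = π₀ y`,
`y°_{k} = π_k y` for singletons `{k}`, and `y°_I = 0` for `|I| ≥ 2`.
-/

section Aux

variable {k : Type u} [CommSemiring k] (C : CDC k)

theorem pair_comp {Z Z' A B : C.Obj} (f : C.Hom Z A) (g : C.Hom Z B) (h : C.Hom Z' Z) :
    C.comp (C.pair f g) h = C.pair (C.comp f h) (C.comp g h) := by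
  rw [← C.pair_unique (C.comp (C.pair f g) h), ← C.comp_assoc, ← C.comp_assoc,
    C.fst_pair, C.snd_pair]

theorem tupleD_comp {Z Z' A : C.Obj} (n : ℕ) (x : Fin (n + 1) → C.Hom Z A)
    (h : C.Hom Z' Z) :
    C.comp (C.toCDCData.tupleD n x) h = C.toCDCData.tupleD n fun i => C.comp (x i) h := by
  induction n with
  | zero => rfl
  | succ n ih =>
    show C.comp (C.pair (C.toCDCData.tupleD n fun i => x i.castSucc) (x (Fin.last (n + 1)))) h =
      C.pair (C.toCDCData.tupleD n fun i => C.comp (x i.castSucc) h) (C.comp (x (Fin.last (n + 1))) h)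
    rw [pair_comp, ih]

theorem zpad_comp {Z Z' A : C.Obj} (n : ℕ) (v : C.Hom Z A) (h : C.Hom Z' Z) :
    C.comp (C.toCDCData.zpad n v) h = C.toCDCData.zpad n (C.comp v h) := by
  induction n with
  | zero => rfl
  | succ n ih =>
    show C.comp (C.pair (C.toCDCData.zpad n v) 0) h = C.pair (C.toCDCData.zpad n (C.comp v h)) 0
    rw [pair_comp, ih, C.zero_comp]

theorem cube_comp {Z Z' A : C.Obj} (n : ℕ) (x : (Fin n → Bool) → C.Hom Z A)
    (h : C.Hom Z' Z) :
    C.comp (C.toCDCData.cube n x) h = C.toCDCData.cube n fun b => C.comp (x b) h := by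
  induction n with
  | zero => rfl
  | succ n ih =>
    show C.comp (C.pair (C.toCDCData.cube n fun b => x (Fin.snoc b false))
        (C.toCDCData.cube n fun b => x (Fin.snoc b true))) h =
      C.pair (C.toCDCData.cube n fun b => C.comp (x (Fin.snoc b false)) h)
        (C.toCDCData.cube n fun b => C.comp (x (Fin.snoc b true)) h)
    rw [pair_comp, ih, ih]

theorem projD_castSucc {A : C.Obj} (n : ℕ) (j : Fin (n + 1)) :
    C.toCDCData.projD (A := A) (n + 1) (Fin.castSucc j)
      = C.comp (C.toCDCData.projD n j) C.fst := by
  simp [CDCData.projD]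
  exact Fin.lastCases_castSucc _

theorem projD_last {A : C.Obj} (n : ℕ) :
    C.toCDCData.projD (A := A) (n + 1) (Fin.last (n + 1)) = C.snd := by
  simp [CDCData.projD]
  exact Fin.lastCases_last

theorem projD_tupleD {Z A : C.Obj} (n : ℕ) (x : Fin (n + 1) → C.Hom Z A) (i : Fin (n + 1)) :
    C.comp (C.toCDCData.projD n i) (C.toCDCData.tupleD n x) = x i := by
  induction n with
  | zero =>
    have : i = 0 := Fin.ext (by omega)
    subst this
    exact C.id_comp (x 0)
  | succ n ih =>
    induction i using Fin.lastCases with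
    | last => rw [projD_last]; exact C.snd_pair _ _
    | cast j =>
      rw [projD_castSucc]
      exact (C.comp_assoc _ _ _).trans
        ((congrArg (C.comp (C.toCDCData.projD n j)) (C.fst_pair _ _)).trans (ih _ _))

theorem projD_zpad_zero {Z A : C.Obj} (n : ℕ) (v : C.Hom Z A) :
    C.comp (C.toCDCData.projD n 0) (C.toCDCData.zpad n v) = v := by
  induction n with
  | zero => exact C.id_comp v
  | succ n ih =>
    rw [show (0 : Fin (n + 1 + 1)) = Fin.castSucc 0 from (Fin.castSucc_zero).symm,
      projD_castSucc]
    show C.comp (C.comp (C.toCDCData.projD n 0) C.fst) (C.pair (C.toCDCData.zpad n v) 0) = v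
    rw [C.comp_assoc, C.fst_pair, ih]

theorem projD_zpad_succ {Z A : C.Obj} (n : ℕ) (v : C.Hom Z A) (j : Fin n) :
    C.comp (C.toCDCData.projD n (Fin.succ j)) (C.toCDCData.zpad n v) = 0 := by
  induction n with
  | zero => exact j.elim0
  | succ n ih =>
    induction j using Fin.lastCases with
    | last =>
      rw [Fin.succ_last]
      rw [projD_last]; exact C.snd_pair _ _
    | cast j =>
      rw [Fin.succ_castSucc]
      rw [projD_castSucc]
      exact (C.comp_assoc _ _ _).trans
        ((congrArg (C.comp (C.toCDCData.projD n j.succ)) (C.fst_pair _ _)).trans (ih _))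

theorem pair_fst_snd {A B : C.Obj} :
    C.pair (C.fst (A := A) (B := B)) C.snd = C.id (C.prod A B) := by
  have h := C.pair_unique (C.id (C.prod A B))
  rwa [C.comp_id, C.comp_id] at h

theorem tupleD_proj {A : C.Obj} (n : ℕ) :
    C.toCDCData.tupleD n (fun i => C.toCDCData.projD n i) = C.id (C.toCDCData.dom A n) := by
  induction n with
  | zero => rfl
  | succ n ih =>
    show C.pair (C.toCDCData.tupleD n fun i => C.toCDCData.projD (n + 1) (Fin.castSucc i))
        (C.toCDCData.projD (n + 1) (Fin.last (n + 1))) = _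
    simp only [projD_castSucc, projD_last]
    have e : (C.toCDCData.tupleD n fun i =>
        C.comp (C.toCDCData.projD (A := A) n i) (C.fst (B := A))) = C.fst := by
      rw [← tupleD_comp, ih, C.id_comp]
    exact (congrArg (fun t => C.pair t C.snd) e).trans (pair_fst_snd C)

theorem D_zero {A B : C.Obj} : C.D (0 : C.Hom A B) = 0 := by
  have h := C.D_smul (0 : k) (0 : C.Hom A B)
  simpa using h

theorem D_comp_fst {Z A B : C.Obj} (h : C.Hom Z (C.prod A B)) :
    C.D (C.comp C.fst h) = C.comp C.fst (C.D h) := by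
  rw [C.D_comp, C.D_fst, C.comp_assoc, C.snd_pair]

theorem D_comp_snd {Z A B : C.Obj} (h : C.Hom Z (C.prod A B)) :
    C.D (C.comp C.snd h) = C.comp C.snd (C.D h) := by
  rw [C.D_comp, C.D_snd, C.comp_assoc, C.snd_pair]

theorem D_pair {Z A B : C.Obj} (f : C.Hom Z A) (g : C.Hom Z B) :
    C.D (C.pair f g) = C.pair (C.D f) (C.D g) := by
  rw [← C.pair_unique (C.D (C.pair f g)), ← D_comp_fst, ← D_comp_snd, C.fst_pair, C.snd_pair]

theorem D_projD {A : C.Obj} (n : ℕ) (i : Fin (n + 1)) :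
    C.D (C.toCDCData.projD (A := A) n i) = C.comp (C.toCDCData.projD n i) C.snd := by
  induction n with
  | zero =>
    show C.D (C.id A) = C.comp (C.id A) C.snd
    rw [C.D_id, C.id_comp]
  | succ n ih =>
    induction i using Fin.lastCases with
    | last => rw [projD_last]; exact C.D_snd
    | cast j =>
      rw [projD_castSucc]
      have e : C.D (C.comp (C.toCDCData.projD (A := A) n j) (C.fst (B := A))) =
          C.comp (C.comp (C.toCDCData.projD n j) (C.fst (B := A))) C.snd := by
        rw [C.D_comp, C.D_fst, ih, C.comp_assoc, C.comp_assoc, C.snd_pair]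
      exact e

theorem D_cube {Z A : C.Obj} (n : ℕ) (x : (Fin n → Bool) → C.Hom Z A) :
    C.D (C.toCDCData.cube n x) = C.toCDCData.cube n fun b => C.D (x b) := by
  induction n with
  | zero => rfl
  | succ n ih =>
    show C.D (C.pair (C.toCDCData.cube n fun b => x (Fin.snoc b false))
        (C.toCDCData.cube n fun b => x (Fin.snoc b true))) =
      C.pair (C.toCDCData.cube n fun b => C.D (x (Fin.snoc b false)))
        (C.toCDCData.cube n fun b => C.D (x (Fin.snoc b true)))
    rw [D_pair, ih, ih]

/-- The function tupled by the cube in Statement 3. -/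
def gfun {X A : C.Obj} (n : ℕ) (y : Fin (n + 1) → C.Hom X A) (b : Fin n → Bool) :
    C.Hom X A :=
  if (CDCData.bset b) = ∅ then y 0
  else if h : (CDCData.bset b).card = 1 then
    y (Fin.succ (((CDCData.bset b).orderIsoOfFin h 0 : Fin n)))
  else 0

theorem gfun_comp {X X' A : C.Obj} (n : ℕ) (y : Fin (n + 1) → C.Hom X A)
    (b : Fin n → Bool) (h : C.Hom X' X) :
    C.comp (gfun C n y b) h = gfun C n (fun i => C.comp (y i) h) b := by
  unfold gfun
  split_ifs <;> simp [CDC.zero_comp]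

theorem gfun_zero_pattern {X A : C.Obj} (n : ℕ) (v : C.Hom X A)
    (y : Fin (n + 1) → C.Hom X A) (b : Fin n → Bool)
    (h0 : y 0 = v) (hs : ∀ j : Fin n, y (Fin.succ j) = 0) :
    gfun C n y b = if CDCData.bset b = ∅ then v else 0 := by
  unfold gfun
  split_ifs <;> simp [h0, hs]

theorem bset_snoc_false {n : ℕ} (b : Fin n → Bool) :
    CDCData.bset (Fin.snoc b false) =
      (CDCData.bset b).map Fin.castSuccEmb := by
  ext i
  induction i using Fin.lastCases with
  | last =>
    simp only [CDCData.bset, Finset.mem_filter, Finset.mem_univ, true_and,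
      Fin.snoc_last, Finset.mem_map]
    constructor
    · intro h; exact absurd h (by simp)
    · rintro ⟨x, -, hx⟩
      exact absurd hx (Fin.castSucc_lt_last x).ne
  | cast j =>
    simp only [CDCData.bset, Finset.mem_filter, Finset.mem_univ, true_and,
      Fin.snoc_castSucc, Finset.mem_map]
    constructor
    · intro h; exact ⟨j, by simpa [CDCData.bset] using h, rfl⟩
    · rintro ⟨x, hx, hex⟩
      have : x = j := Fin.castSucc_injective _ hex
      subst this
      simpa [CDCData.bset] using hx

theorem bset_snoc_true {n : ℕ} (b : Fin n → Bool) :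
    CDCData.bset (Fin.snoc b true) =
      insert (Fin.last n) ((CDCData.bset b).map Fin.castSuccEmb) := by
  ext i
  induction i using Fin.lastCases with
  | last =>
    simp [CDCData.bset, Fin.snoc_last]
  | cast j =>
    simp only [CDCData.bset, Finset.mem_filter, Finset.mem_univ, true_and,
      Fin.snoc_castSucc, Finset.mem_insert, Finset.mem_map]
    constructor
    · intro h; exact Or.inr ⟨j, by simpa [CDCData.bset] using h, rfl⟩
    · rintro (h | ⟨x, hx, hex⟩)
      · exact absurd h (Fin.castSucc_lt_last j).ne
      · have : x = j := Fin.castSucc_injective _ hex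
        subst this
        simpa [CDCData.bset] using hx

theorem last_not_mem_map {n : ℕ} (s : Finset (Fin n)) :
    Fin.last n ∉ s.map Fin.castSuccEmb := by
  simp only [Finset.mem_map]
  rintro ⟨x, -, hx⟩
  exact absurd hx (Fin.castSucc_lt_last x).ne

theorem gfun_snoc_false {X A : C.Obj} (n : ℕ) (y : Fin (n + 2) → C.Hom X A)
    (b : Fin n → Bool) :
    gfun C (n + 1) y (Fin.snoc b false) = gfun C n (fun i => y i.castSucc) b := by
  unfold gfun
  rw [bset_snoc_false]
  by_cases he : CDCData.bset b = ∅
  · rw [if_pos (by simp [he]), if_pos he]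
    show y 0 = y (Fin.castSucc 0)
    rw [Fin.castSucc_zero]
  · have hne : ¬((CDCData.bset b).map Fin.castSuccEmb = ∅) := by
      simpa [Finset.map_eq_empty] using he
    by_cases hc : (CDCData.bset b).card = 1
    · have hmc : ((CDCData.bset b).map Fin.castSuccEmb).card = 1 := by
        simpa [Finset.card_map] using hc
      rw [if_neg hne, dif_pos hmc, if_neg he, dif_pos hc]
      obtain ⟨a, ha⟩ := Finset.card_eq_one.mp hc
      have e1 : ((CDCData.bset b).orderIsoOfFin hc 0 : Fin n) = a :=
        Finset.mem_singleton.mp (by rw [← ha]; exact ((CDCData.bset b).orderIsoOfFin hc 0).2)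
      have hmem2 := (((CDCData.bset b).map Fin.castSuccEmb).orderIsoOfFin hmc 0).2
      rw [Finset.mem_map] at hmem2
      obtain ⟨x, hx, hex⟩ := hmem2
      have hxa : x = a := Finset.mem_singleton.mp (ha ▸ hx)
      subst hxa
      have e2 : (((CDCData.bset b).map Fin.castSuccEmb).orderIsoOfFin hmc 0
          : Fin (n + 1)) = x.castSucc := hex.symm
      rw [e1, e2, Fin.succ_castSucc]
    · have hmc : ¬(((CDCData.bset b).map Fin.castSuccEmb).card = 1) := by
        simpa [Finset.card_map] using hc
      rw [if_neg hne, dif_neg hmc, if_neg he, dif_neg hc]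

theorem gfun_snoc_true {X A : C.Obj} (n : ℕ) (y : Fin (n + 2) → C.Hom X A)
    (b : Fin n → Bool) :
    gfun C (n + 1) y (Fin.snoc b true) =
      if CDCData.bset b = ∅ then y (Fin.last (n + 1)) else 0 := by
  unfold gfun
  rw [bset_snoc_true]
  have hnm := last_not_mem_map (CDCData.bset b)
  by_cases he : CDCData.bset b = ∅
  · have hset : insert (Fin.last n) ((CDCData.bset b).map Fin.castSuccEmb)
        = {Fin.last n} := by simp [he]
    have hne : ¬(insert (Fin.last n)
        ((CDCData.bset b).map Fin.castSuccEmb) = ∅) := by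
      simp [hset]
    have hc : (insert (Fin.last n)
        ((CDCData.bset b).map Fin.castSuccEmb)).card = 1 := by
      simp [hset]
    rw [if_neg hne, dif_pos hc, if_pos he]
    have e1 : ((insert (Fin.last n)
        ((CDCData.bset b).map Fin.castSuccEmb)).orderIsoOfFin hc 0
        : Fin (n + 1)) = Fin.last n :=
      Finset.mem_singleton.mp (by rw [← hset]; exact ((insert (Fin.last n) ((CDCData.bset b).map Fin.castSuccEmb)).orderIsoOfFin hc 0).2)
    rw [e1, Fin.succ_last]
  · have hne : ¬(insert (Fin.last n)
        ((CDCData.bset b).map Fin.castSuccEmb) = ∅) := by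
      simp
    have hcard : (insert (Fin.last n)
        ((CDCData.bset b).map Fin.castSuccEmb)).card
        = (CDCData.bset b).card + 1 := by
      rw [Finset.card_insert_of_notMem hnm, Finset.card_map]
    have hpos : 1 ≤ (CDCData.bset b).card :=
      Finset.card_pos.mpr (Finset.nonempty_of_ne_empty he)
    have hc : ¬((insert (Fin.last n)
        ((CDCData.bset b).map Fin.castSuccEmb)).card = 1) := by
      omega
    rw [if_neg hne, dif_neg hc, if_neg he]

theorem D_cmap {A : C.Obj} (n : ℕ) :
    C.D (C.toCDCData.cube n (gfun C n fun i => C.toCDCData.projD (A := A) n i))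
      = C.comp (C.toCDCData.cube n (gfun C n fun i => C.toCDCData.projD n i)) C.snd := by
  rw [D_cube, cube_comp]
  congr 1
  funext b
  rw [gfun_comp]
  unfold gfun
  split_ifs <;> simp [D_projD, D_zero, CDC.zero_comp]

end Aux

theorem statement3 {k : Type u} [CommSemiring k] (C : CDC k)
    {A B : C.Obj} (f : C.Hom A B) (n : ℕ) (X : C.Obj)
    (y : Fin (n + 1) → C.Hom X A) :
    C.comp (C.fDeriv f n) (C.toCDCData.tupleD n y) =
      C.comp (C.iterD f n)
        (C.toCDCData.cube n (fun b =>
          if (CDCData.bset b) = ∅ then y 0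
          else if h : (CDCData.bset b).card = 1 then
            y (Fin.succ (((CDCData.bset b).orderIsoOfFin h 0 : Fin n)))
          else 0)) := by
  induction n generalizing X with
  | zero =>
    show C.comp f (y 0) = C.comp f _
    congr 1
  | succ n ih =>
    have hF : C.fDeriv f n = C.comp (C.iterD f n)
        (C.toCDCData.cube n (gfun C n fun i => C.toCDCData.projD n i)) := by
      have h0 := ih (C.toCDCData.dom A n) fun i => C.toCDCData.projD n i
      rw [tupleD_proj, C.comp_id] at h0
      exact h0
    show C.comp (C.comp (C.D (C.fDeriv f n)) (C.pair C.fst (C.toCDCData.zpad n C.snd)))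
        (C.pair (C.toCDCData.tupleD n fun i => y i.castSucc) (y (Fin.last (n + 1))))
      = C.comp (C.D (C.iterD f n))
          (C.pair (C.toCDCData.cube n fun b => gfun C (n + 1) y (Fin.snoc b false))
            (C.toCDCData.cube n fun b => gfun C (n + 1) y (Fin.snoc b true)))
    rw [C.comp_assoc, pair_comp, C.fst_pair, zpad_comp, C.snd_pair]
    rw [hF, C.D_comp, D_cmap, C.comp_assoc, pair_comp]
    simp only [CDC.comp_assoc]
    rw [C.fst_pair, C.snd_pair]
    congr 1
    congr 1
    · rw [cube_comp]
      congr 1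
      funext b
      rw [gfun_comp, gfun_snoc_false]
      simp only [projD_tupleD]
    · rw [cube_comp]
      congr 1
      funext b
      rw [gfun_comp, gfun_snoc_true]
      exact gfun_zero_pattern C n _ _ b (projD_zpad_zero C n _) (fun j => projD_zpad_succ C n _ j)
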